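/- arXiv:1309.7066 — 7 statements merged into one kernel-verified Lean document; each statement's English description precedes it below -/
import Mathlib

section
/- Let G be a finite simple graph, s ≠ t vertices, and g a flow from s to t of value x with x ≥ 0. Then the volume of g is at least x · dist(s,t), i.e., ∑_{(u,v)∈V×V} g(u,v) ≥ x · dist(s,t). (This is the paper's claim that a flow of throughput x between endpoints at shortest-path distance d consumes at least x·d units of capacity.) -/
open Finset

/-- A flow from `s` to `t` of value `x` on the simple graph `G`:
nonnegative, supported on adjacent pairs, conserved at internal vertices,
with net outflow `x` at `s`. -/
def IsFlow {V : Type*} [Fintype V] (G : SimpleGraph V) (s t : V) (x : ℝ)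
    (g : V → V → ℝ) : Prop :=
  (∀ u v, 0 ≤ g u v) ∧
  (∀ u v, ¬ G.Adj u v → g u v = 0) ∧
  (∀ w, w ≠ s → w ≠ t → (∑ u, g u w) = (∑ v, g w v)) ∧
  ((∑ v, g s v) - (∑ u, g u s) = x)

/-- A flow of value `x ≥ 0` from `s` to `t` has total volume at least
`x` times the shortest-path distance from `s` to `t`. -/
theorem stmt_1 {V : Type*} [Fintype V] [DecidableEq V] (G : SimpleGraph V)
    (s t : V) (hst : s ≠ t) (x : ℝ) (g : V → V → ℝ)
    (hg : IsFlow G s t x g) (hx : 0 ≤ x) :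
    x * (G.dist s t : ℝ) ≤ ∑ u, ∑ v, g u v := by
  obtain ⟨hnn, hsupp, hcons, hval⟩ := hg
  have hvol : (0:ℝ) ≤ ∑ u, ∑ v, g u v :=
    Finset.sum_nonneg fun u _ => Finset.sum_nonneg fun v _ => hnn u v
  set d : ℝ := (G.dist s t : ℝ) with hd
  have hd0 : 0 ≤ d := by positivity
  -- potential function
  set φ : V → ℝ := fun v => min (G.dist s v : ℝ) d with hφ
  have hφs : φ s = 0 := by simp [hφ, SimpleGraph.dist_self, hd0]
  have hφt : φ t = d := by simp [hφ, hd]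
  -- φ increases by at most 1 along edges
  have hstep : ∀ u v, G.Adj u v → φ v ≤ φ u + 1 := by
    intro u v hadj
    by_cases hru : G.Reachable s u
    · obtain ⟨p, hp⟩ := hru.exists_walk_length_eq_dist
      have hle : G.dist s v ≤ G.dist s u + 1 := by
        have := SimpleGraph.dist_le (p.concat hadj)
        simpa [SimpleGraph.Walk.length_concat, hp] using this
      have hdv : (G.dist s v : ℝ) ≤ (G.dist s u : ℝ) + 1 := by exact_mod_cast hle
      simp only [hφ]
      rcases min_cases (G.dist s v : ℝ) d with ⟨e, he⟩ | ⟨e, he⟩ <;>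
        rcases min_cases (G.dist s u : ℝ) d with ⟨e', he'⟩ | ⟨e', he'⟩ <;>
        rw [e, e'] <;> linarith
    · have hrv : ¬ G.Reachable s v := fun h => hru (h.trans ⟨hadj.symm.toWalk⟩)
      have h1 : G.dist s u = 0 := SimpleGraph.dist_eq_zero_of_not_reachable hru
      have h2 : G.dist s v = 0 := SimpleGraph.dist_eq_zero_of_not_reachable hrv
      simp [hφ, h1, h2, hd0]
  -- net inflow/outflow function
  set net : V → ℝ := fun w => (∑ u, g u w) - (∑ v, g w v) with hnet
  have hnetsum : ∑ w, net w = 0 := by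
    simp only [hnet, Finset.sum_sub_distrib]
    rw [Finset.sum_comm]
    ring
  have hnet_zero : ∀ w, w ≠ s → w ≠ t → net w = 0 := by
    intro w h1 h2; simp [hnet, hcons w h1 h2]
  have hnets : net s = -x := by simp only [hnet]; linarith [hval]
  have hsum_pair : ∀ f : V → ℝ, (∀ w, w ≠ s → w ≠ t → f w = 0) →
      ∑ w, f w = f s + f t := by
    intro f hf
    rw [← Finset.sum_subset (Finset.subset_univ ({s, t} : Finset V))
      (fun w _ hw => by
        simp only [Finset.mem_insert, Finset.mem_singleton, not_or] at hw
        exact hf w hw.1 hw.2)]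
    exact Finset.sum_pair hst
  have hnett : net t = x := by
    have := hsum_pair net hnet_zero
    rw [hnetsum, hnets] at this
    linarith
  -- the key identity
  have hkey : ∑ u, ∑ v, g u v * (φ v - φ u) = ∑ w, net w * φ w := by
    simp only [mul_sub, Finset.sum_sub_distrib, hnet, sub_mul, ← Finset.sum_mul]
    rw [Finset.sum_comm (f := fun u v => g u v * φ v)]
    simp only [← Finset.sum_mul]
  have hrhs : ∑ w, net w * φ w = x * d := by
    rw [hsum_pair (fun w => net w * φ w) (fun w h1 h2 => by simp [hnet_zero w h1 h2])]
    rw [hφs, hφt, hnett]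
    ring
  have hbound : ∑ u, ∑ v, g u v * (φ v - φ u) ≤ ∑ u, ∑ v, g u v := by
    refine Finset.sum_le_sum fun u _ => Finset.sum_le_sum fun v _ => ?_
    by_cases hadj : G.Adj u v
    · have h1 : φ v - φ u ≤ 1 := by linarith [hstep u v hadj]
      nlinarith [hnn u v]
    · simp [hsupp u v hadj]
  calc x * d = ∑ u, ∑ v, g u v * (φ v - φ u) := by rw [hkey, hrhs]
    _ ≤ ∑ u, ∑ v, g u v := hbound
end

section
/- (Theorem 1 of the paper.) Let G be an r-regular simple graph on N vertices, let (s_i, t_i)_{i∈I} be a finite family of commodities with s_i ≠ t_i, and let (g_i)_{i∈I} be a concurrent multicommodity flow respecting unit capacities, in which every commodity's value satisfies x_i ≥ T for some real T ≥ 0. Then T · ∑_{i∈I} dist(s_i, t_i) ≤ N · r. Equivalently, when ∑_{i∈I} dist(s_i,t_i) > 0, the minimum-flow throughput T is at most N r divided by the sum of the commodity endpoint distances (the paper writes this as T ≤ Nr/(⟨D⟩ f) with f commodities of average endpoint distance ⟨D⟩). -/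
open Finset

lemma flow_volume {V : Type*} [Fintype V] [DecidableEq V] (G : SimpleGraph V)
    (s t : V) (hst : s ≠ t) (x : ℝ) (g : V → V → ℝ)
    (h : IsFlow G s t x g) :
    x * (G.dist s t : ℝ) ≤ ∑ u, ∑ v, g u v := by
  obtain ⟨hpos, hsupp, hcons, hval⟩ := h
  set d : V → ℝ := fun v => (G.dist s v : ℝ) with hd
  set In : V → ℝ := fun w => ∑ u, g u w with hIn
  set Out : V → ℝ := fun w => ∑ v, g w v with hOut
  -- net inflow at t is x
  have hsum0 : ∑ w, (In w - Out w) = 0 := by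
    simp only [Finset.sum_sub_distrib, hIn, hOut]
    rw [Finset.sum_comm]
    ring
  have hzero : ∀ w ∈ (Finset.univ : Finset V), w ∉ ({s, t} : Finset V) →
      In w - Out w = 0 := by
    intro w _ hw
    simp only [Finset.mem_insert, Finset.mem_singleton] at hw
    push_neg at hw
    exact sub_eq_zero.mpr (hcons w hw.1 hw.2)
  have hpair : ∑ w, (In w - Out w) = (In s - Out s) + (In t - Out t) := by
    rw [← Finset.sum_subset (Finset.subset_univ ({s, t} : Finset V)) hzero,
      Finset.sum_pair hst]
  have hvals : In s - Out s = -x := by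
    simp only [hIn, hOut]; linarith [hval]
  have ht : In t - Out t = x := by
    rw [hpair] at hsum0; linarith
  -- weighted sum identity
  have key : ∑ u, ∑ v, g u v * (d v - d u) = x * d t := by
    have e1 : ∑ u, ∑ v, g u v * (d v - d u)
        = ∑ w, d w * (In w - Out w) := by
      simp only [mul_sub, Finset.sum_sub_distrib]
      congr 1
      · rw [Finset.sum_comm]
        refine Finset.sum_congr rfl fun w _ => ?_
        simp only [hIn, Finset.mul_sum]
        exact Finset.sum_congr rfl fun u _ => mul_comm _ _
      · refine Finset.sum_congr rfl fun w _ => ?_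
        simp only [hOut, Finset.mul_sum]
        exact Finset.sum_congr rfl fun v _ => mul_comm _ _
    rw [e1]
    have hzero' : ∀ w ∈ (Finset.univ : Finset V), w ∉ ({s, t} : Finset V) →
        d w * (In w - Out w) = 0 := by
      intro w hw1 hw2; rw [hzero w hw1 hw2]; ring
    rw [← Finset.sum_subset (Finset.subset_univ ({s, t} : Finset V)) hzero',
      Finset.sum_pair hst, ht]
    have hds : d s = 0 := by simp [hd]
    rw [hds]; ring
  -- termwise bound
  have bound : ∀ u v, g u v * (d v - d u) ≤ g u v := by
    intro u v
    by_cases hg : g u v = 0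
    · simp [hg]
    · have hadj : G.Adj u v := by
        by_contra hc; exact hg (hsupp u v hc)
      have hdle : d v - d u ≤ 1 := by
        by_cases hr : G.Reachable s u
        · obtain ⟨p, hp⟩ := hr.exists_walk_length_eq_dist
          have := G.dist_le (p.concat hadj)
          rw [SimpleGraph.Walk.length_concat, hp] at this
          simp only [hd]
          have := (Nat.cast_le (α := ℝ)).2 this
          push_cast at this ⊢
          linarith
        · have hru : G.dist s u = 0 := G.dist_eq_zero_of_not_reachable hr
          have hrv : G.dist s v = 0 := by
            apply G.dist_eq_zero_of_not_reachable
            intro hc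
            exact hr (hc.trans hadj.symm.reachable)
          simp [hd, hru, hrv]
      calc g u v * (d v - d u) ≤ g u v * 1 :=
            mul_le_mul_of_nonneg_left hdle (hpos u v)
        _ = g u v := mul_one _
  calc x * (G.dist s t : ℝ) = ∑ u, ∑ v, g u v * (d v - d u) := by
        exact key.symm
    _ ≤ ∑ u, ∑ v, g u v :=
        Finset.sum_le_sum fun u _ => Finset.sum_le_sum fun v _ => bound u v

/-- Theorem 1 of the paper: for an `r`-regular graph on `N` vertices and a
concurrent multicommodity flow respecting unit capacities in which every
commodity's value is at least `T ≥ 0`, we have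
`T · ∑ᵢ dist(sᵢ,tᵢ) ≤ N·r`. -/
theorem stmt_2 {V I : Type*} [Fintype V] [DecidableEq V] [Fintype I]
    (G : SimpleGraph V) [DecidableRel G.Adj] (N r : ℕ)
    (hN : Fintype.card V = N) (hreg : G.IsRegularOfDegree r)
    (s t : I → V) (hst : ∀ i, s i ≠ t i) (x : I → ℝ)
    (g : I → V → V → ℝ)
    (hflow : ∀ i, IsFlow G (s i) (t i) (x i) (g i))
    (hcap : ∀ u v, (∑ i, g i u v) ≤ 1)
    (T : ℝ) (hT : 0 ≤ T) (hTx : ∀ i, T ≤ x i) :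
    T * ∑ i, (G.dist (s i) (t i) : ℝ) ≤ (N : ℝ) * (r : ℝ) := by
  have step1 : T * ∑ i, (G.dist (s i) (t i) : ℝ)
      ≤ ∑ i, x i * (G.dist (s i) (t i) : ℝ) := by
    rw [Finset.mul_sum]
    exact Finset.sum_le_sum fun i _ =>
      mul_le_mul_of_nonneg_right (hTx i) (Nat.cast_nonneg _)
  have step2 : ∑ i, x i * (G.dist (s i) (t i) : ℝ)
      ≤ ∑ i, ∑ u, ∑ v, g i u v :=
    Finset.sum_le_sum fun i _ =>
      flow_volume G (s i) (t i) (hst i) (x i) (g i) (hflow i)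
  have step3 : ∑ i, ∑ u, ∑ v, g i u v
      ≤ ∑ u, ∑ v, (if G.Adj u v then (1 : ℝ) else 0) := by
    rw [Finset.sum_comm]
    refine Finset.sum_le_sum fun u _ => ?_
    rw [Finset.sum_comm]
    refine Finset.sum_le_sum fun v _ => ?_
    by_cases hadj : G.Adj u v
    · simpa [hadj] using hcap u v
    · have : ∀ i, g i u v = 0 := fun i => (hflow i).2.1 u v hadj
      simp [hadj, this]
  have step4 : ∑ u, ∑ v, (if G.Adj u v then (1 : ℝ) else 0)
      = (N : ℝ) * (r : ℝ) := by
    have : ∀ u : V, ∑ v, (if G.Adj u v then (1 : ℝ) else 0) = (r : ℝ) := by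
      intro u
      rw [Finset.sum_boole]
      have hfil : Finset.univ.filter (G.Adj u) = G.neighborFinset u := by
        ext v; simp
      rw [hfil]
      exact_mod_cast hreg u
    simp only [this, Finset.sum_const, Finset.card_univ, hN, nsmul_eq_mul]
  linarith
end

section
/- Let G be a connected simple graph on N vertices in which every vertex has degree at most r (r ≥ 2), and let u be a vertex. Then for every integer k ≥ 1, ∑_{v∈V} dist(u,v) ≥ ∑_{j=1}^{k−1} j·r(r−1)^{j−1} + k·R, where R := (N−1) − ∑_{j=1}^{k−1} r(r−1)^{j−1}. (The paper applies this with k the largest integer for which R ≥ 0, but the inequality holds for every k ≥ 1.) -/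
open Finset

section Aux

variable {V : Type*} [Fintype V] [DecidableEq V] (G : SimpleGraph V)
    [DecidableRel G.Adj]

/-- predecessor on a shortest path -/
lemma aux_exists_adj (hconn : G.Connected) (u v : V) (j : ℕ)
    (hv : G.dist u v = j + 1) :
    ∃ w, G.Adj w v ∧ G.dist u w = j := by
  obtain ⟨p, hp⟩ := hconn.exists_walk_length_eq_dist u v
  have hne : v ≠ u := by
    intro h; subst h
    rw [(hconn.dist_eq_zero_iff).mpr rfl] at hv; omega
  obtain ⟨w, hadj, q, hq⟩ := SimpleGraph.Walk.exists_eq_cons_of_ne hne p.reverse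
  have hql : q.length = j := by
    have := congrArg SimpleGraph.Walk.length hq
    simp [SimpleGraph.Walk.length_cons, hp, hv] at this
    omega
  refine ⟨w, hadj.symm, ?_⟩
  have h1 : G.dist u w ≤ j := by
    have := SimpleGraph.dist_le q.reverse
    simpa [hql] using this
  have h2 : j + 1 ≤ G.dist u w + 1 := by
    calc j + 1 = G.dist u v := hv.symm
      _ ≤ G.dist u w + G.dist w v := hconn.dist_triangle
      _ ≤ G.dist u w + 1 := by
          have : G.dist w v = 1 := SimpleGraph.dist_eq_one_iff_adj.mpr hadj.symm
          omega
  omega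

/-- sphere size bound -/
lemma aux_sphere (hconn : G.Connected) (r : ℕ) (hdeg : ∀ v, G.degree v ≤ r)
    (hr : 2 ≤ r) (u : V) :
    ∀ j, 1 ≤ j →
      (univ.filter (fun v => G.dist u v = j)).card ≤ r * (r - 1) ^ (j - 1) := by
  intro j hj
  induction j with
  | zero => omega
  | succ j ih =>
    rcases Nat.eq_or_lt_of_le hj with h1 | h1
    · -- j + 1 = 1
      have hj0 : j = 0 := by omega
      subst hj0
      simp only [Nat.add_sub_cancel, pow_zero, mul_one]
      calc (univ.filter (fun v => G.dist u v = 1)).card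
          ≤ (G.neighborFinset u).card := by
            apply Finset.card_le_card
            intro v hv
            simp only [mem_filter, mem_univ, true_and] at hv
            rw [SimpleGraph.mem_neighborFinset]
            exact SimpleGraph.dist_eq_one_iff_adj.mp hv
        _ ≤ r := hdeg u
    · have hj1 : 1 ≤ j := by omega
      have ihj := ih hj1
      -- S (j+1) ⊆ biUnion over S j
      have hsub : (univ.filter (fun v => G.dist u v = j + 1)) ⊆
          (univ.filter (fun w => G.dist u w = j)).biUnion
            (fun w => G.neighborFinset w ∩ univ.filter (fun v => G.dist u v = j + 1)) := by
        intro v hv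
        simp only [mem_filter, mem_univ, true_and] at hv
        obtain ⟨w, hadj, hw⟩ := aux_exists_adj G hconn u v j hv
        simp only [mem_biUnion, mem_filter, mem_univ, true_and, mem_inter,
          SimpleGraph.mem_neighborFinset]
        exact ⟨w, hw, hadj, hv⟩
      have hbound : ∀ w ∈ univ.filter (fun w => G.dist u w = j),
          (G.neighborFinset w ∩ univ.filter (fun v => G.dist u v = j + 1)).card ≤ r - 1 := by
        intro w hw
        simp only [mem_filter, mem_univ, true_and] at hw
        obtain ⟨j', hj'⟩ : ∃ j', j = j' + 1 := ⟨j - 1, by omega⟩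
        obtain ⟨w', hadj', hw'⟩ := aux_exists_adj G hconn u w j' (by rw [hw, hj'])
        have hsub2 : G.neighborFinset w ∩ univ.filter (fun v => G.dist u v = j + 1)
            ⊆ (G.neighborFinset w).erase w' := by
          intro x hx
          simp only [mem_inter, SimpleGraph.mem_neighborFinset, mem_filter, mem_univ,
            true_and] at hx
          rw [Finset.mem_erase, SimpleGraph.mem_neighborFinset]
          refine ⟨?_, hx.1⟩
          intro h; subst h
          rw [hw'] at hx; omega
        calc (G.neighborFinset w ∩ univ.filter (fun v => G.dist u v = j + 1)).card
            ≤ ((G.neighborFinset w).erase w').card := Finset.card_le_card hsub2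
          _ = (G.neighborFinset w).card - 1 := by
              rw [Finset.card_erase_of_mem]
              rw [SimpleGraph.mem_neighborFinset]; exact hadj'.symm
          _ ≤ r - 1 := by
              have := hdeg w
              rw [SimpleGraph.card_neighborFinset_eq_degree]
              omega
      calc (univ.filter (fun v => G.dist u v = j + 1)).card
          ≤ ∑ w ∈ univ.filter (fun w => G.dist u w = j),
              (G.neighborFinset w ∩ univ.filter (fun v => G.dist u v = j + 1)).card :=
            (Finset.card_le_card hsub).trans (Finset.card_biUnion_le)
        _ ≤ ∑ _w ∈ univ.filter (fun w => G.dist u w = j), (r - 1) :=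
            Finset.sum_le_sum hbound
        _ = (univ.filter (fun w => G.dist u w = j)).card * (r - 1) := by
            rw [Finset.sum_const, smul_eq_mul]
        _ ≤ r * (r - 1) ^ (j - 1) * (r - 1) := by
            exact Nat.mul_le_mul_right _ ihj
        _ = r * (r - 1) ^ j := by
            rw [mul_assoc, ← pow_succ]
            congr 2
            omega
        _ = r * (r - 1) ^ (j + 1 - 1) := by norm_num

end Aux

/-- Lower bound on the sum of distances from a fixed vertex `u` in a connected
graph on `N` vertices with maximum degree at most `r`: for every `k ≥ 1`,
`∑_v dist(u,v) ≥ ∑_{j=1}^{k−1} j·r·(r−1)^{j−1} + k·R` where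
`R = (N−1) − ∑_{j=1}^{k−1} r·(r−1)^{j−1}`. -/
theorem stmt_4 {V : Type*} [Fintype V] [DecidableEq V] (G : SimpleGraph V)
    [DecidableRel G.Adj] (N r : ℕ) (hN : Fintype.card V = N)
    (hconn : G.Connected) (hdeg : ∀ v, G.degree v ≤ r) (hr : 2 ≤ r)
    (u : V) (k : ℕ) (hk : 1 ≤ k) :
    (∑ j ∈ Finset.Icc 1 (k - 1), (j : ℝ) * (r : ℝ) * ((r : ℝ) - 1) ^ (j - 1))
        + (k : ℝ) * (((N : ℝ) - 1)
            - ∑ j ∈ Finset.Icc 1 (k - 1), (r : ℝ) * ((r : ℝ) - 1) ^ (j - 1))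
      ≤ ∑ v, (G.dist u v : ℝ) := by
  classical
  -- Step 1: rewrite LHS as a sum over range k
  have halg : ∀ m : ℕ, 1 ≤ m →
      (∑ j ∈ Finset.Icc 1 (m - 1), (j : ℝ) * (r : ℝ) * ((r : ℝ) - 1) ^ (j - 1))
        + (m : ℝ) * (((N : ℝ) - 1)
            - ∑ j ∈ Finset.Icc 1 (m - 1), (r : ℝ) * ((r : ℝ) - 1) ^ (j - 1))
      = ∑ i ∈ Finset.range m,
          (((N : ℝ) - 1) - ∑ j ∈ Finset.Icc 1 i, (r : ℝ) * ((r : ℝ) - 1) ^ (j - 1)) := by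
    intro m hm
    induction m with
    | zero => omega
    | succ m ih =>
      rcases Nat.eq_or_lt_of_le hm with h1 | h1
      · have : m = 0 := by omega
        subst this
        simp
      · have hm1 : 1 ≤ m := by omega
        have ihm := ih hm1
        rw [Finset.sum_range_succ, ← ihm]
        have hms : m + 1 - 1 = m := by omega
        have hpeel : ∀ f : ℕ → ℝ, ∑ j ∈ Finset.Icc 1 m, f j
            = ∑ j ∈ Finset.Icc 1 (m - 1), f j + f m := by
          intro f
          have : m - 1 + 1 = m := by omega
          rw [← this, Finset.sum_Icc_succ_top (by omega)]
          rw [this]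
        rw [hms, hpeel (fun j => (j : ℝ) * (r : ℝ) * ((r : ℝ) - 1) ^ (j - 1)),
          hpeel (fun j => (r : ℝ) * ((r : ℝ) - 1) ^ (j - 1))]
        push_cast
        ring
  rw [halg k hk]
  -- sphere bound
  have hsphere := aux_sphere G hconn r hdeg hr u
  -- ball bound in ℕ
  have hball : ∀ i : ℕ, (univ.filter (fun v => G.dist u v ≤ i)).card
      ≤ 1 + ∑ j ∈ Finset.Icc 1 i, r * (r - 1) ^ (j - 1) := by
    intro i
    have hcard : (univ.filter (fun v => G.dist u v ≤ i)).card
        = ∑ j ∈ Finset.range (i + 1),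
            ((univ.filter (fun v => G.dist u v ≤ i)).filter (fun v => G.dist u v = j)).card := by
      apply Finset.card_eq_sum_card_fiberwise
      intro v hv
      simp only [Finset.mem_coe, mem_filter, mem_univ, true_and] at hv
      simp only [Finset.mem_coe, Finset.mem_range]
      omega
    have hrange : Finset.range (i + 1) = insert 0 (Finset.Icc 1 i) := by
      ext x; simp [Finset.mem_range, Finset.mem_Icc]; omega
    rw [hcard, hrange, Finset.sum_insert (by simp)]
    have h0 : ((univ.filter (fun v => G.dist u v ≤ i)).filter
        (fun v => G.dist u v = 0)).card ≤ 1 := by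
      apply Finset.card_le_one.mpr
      intro a ha b hb
      simp only [mem_filter, mem_univ, true_and] at ha hb
      have ha' := (hconn.dist_eq_zero_iff).mp ha.2
      have hb' := (hconn.dist_eq_zero_iff).mp hb.2
      rw [← ha', ← hb']
    have h1 : ∀ j ∈ Finset.Icc 1 i,
        ((univ.filter (fun v => G.dist u v ≤ i)).filter (fun v => G.dist u v = j)).card
          ≤ r * (r - 1) ^ (j - 1) := by
      intro j hj
      simp only [Finset.mem_Icc] at hj
      refine le_trans (Finset.card_le_card ?_) (hsphere j hj.1)
      intro v hv
      simp only [mem_filter, mem_univ, true_and] at hv ⊢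
      exact hv.2
    exact Nat.add_le_add h0 (Finset.sum_le_sum h1)
  -- counting: sum over i of upper level set cards ≤ sum of distances (in ℕ)
  have hcount : ∑ i ∈ Finset.range k, (univ.filter (fun v => i < G.dist u v)).card
      ≤ ∑ v : V, G.dist u v := by
    have h1 : ∀ i : ℕ, (univ.filter (fun v => i < G.dist u v)).card
        = ∑ v : V, if i < G.dist u v then 1 else 0 := by
      intro i; rw [Finset.card_filter]
    calc ∑ i ∈ Finset.range k, (univ.filter (fun v => i < G.dist u v)).card
        = ∑ i ∈ Finset.range k, ∑ v : V, if i < G.dist u v then 1 else 0 := by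
          simp_rw [h1]
      _ = ∑ v : V, ∑ i ∈ Finset.range k, if i < G.dist u v then 1 else 0 :=
          Finset.sum_comm
      _ ≤ ∑ v : V, G.dist u v := by
          apply Finset.sum_le_sum
          intro v _
          calc (∑ i ∈ Finset.range k, if i < G.dist u v then 1 else 0)
              = ((Finset.range k).filter (fun i => i < G.dist u v)).card := by
                rw [Finset.card_filter]
            _ = (Finset.range (min k (G.dist u v))).card := by
                congr 1; ext x
                simp [Finset.mem_range, Nat.lt_min]
            _ = min k (G.dist u v) := Finset.card_range _
            _ ≤ G.dist u v := min_le_right _ _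
  -- complement count
  have hcompl : ∀ i : ℕ, (univ.filter (fun v => i < G.dist u v)).card
      + (univ.filter (fun v => G.dist u v ≤ i)).card = N := by
    intro i
    rw [← hN, ← Finset.card_univ,
      ← Finset.card_filter_add_card_filter_not (s := (univ : Finset V))
        (p := fun v => i < G.dist u v)]
    congr 2
    ext v
    simp [Nat.not_lt]
  -- cast of the nat geometric sum
  have hcast : ∀ i : ℕ, ((∑ j ∈ Finset.Icc 1 i, r * (r - 1) ^ (j - 1) : ℕ) : ℝ)
      = ∑ j ∈ Finset.Icc 1 i, (r : ℝ) * ((r : ℝ) - 1) ^ (j - 1) := by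
    intro i
    push_cast [Nat.cast_sub (by omega : 1 ≤ r)]
    rfl
  -- put everything together
  calc ∑ i ∈ Finset.range k,
        (((N : ℝ) - 1) - ∑ j ∈ Finset.Icc 1 i, (r : ℝ) * ((r : ℝ) - 1) ^ (j - 1))
      ≤ ∑ i ∈ Finset.range k, ((univ.filter (fun v => i < G.dist u v)).card : ℝ) := by
        apply Finset.sum_le_sum
        intro i _
        have hb := hball i
        have hc := hcompl i
        have hcast' := hcast i
        have hcard_le : (univ.filter (fun v => G.dist u v ≤ i)).card ≤ N := by omega
        have : ((univ.filter (fun v => i < G.dist u v)).card : ℝ)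
            = (N : ℝ) - ((univ.filter (fun v => G.dist u v ≤ i)).card : ℝ) := by
          have := congrArg (fun n : ℕ => (n : ℝ)) hc
          push_cast at this
          linarith
        rw [this]
        have : ((univ.filter (fun v => G.dist u v ≤ i)).card : ℝ)
            ≤ 1 + ∑ j ∈ Finset.Icc 1 i, (r : ℝ) * ((r : ℝ) - 1) ^ (j - 1) := by
          rw [← hcast']
          exact_mod_cast hb
        linarith
    _ ≤ ∑ v : V, (G.dist u v : ℝ) := by
        have := hcount
        calc ∑ i ∈ Finset.range k, ((univ.filter (fun v => i < G.dist u v)).card : ℝ)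
            = ((∑ i ∈ Finset.range k, (univ.filter (fun v => i < G.dist u v)).card : ℕ) : ℝ) := by
              push_cast; rfl
          _ ≤ ((∑ v : V, G.dist u v : ℕ) : ℝ) := by exact_mod_cast hcount
          _ = ∑ v : V, (G.dist u v : ℝ) := by push_cast; rfl
end

section
/- Let G be a connected r-regular simple graph on N ≥ 2 vertices. Then for every integer k ≥ 1, the average shortest path length ⟨D⟩ := (1/(N(N−1))) · ∑_{(u,v): u ≠ v} dist(u,v) satisfies ⟨D⟩ ≥ ( ∑_{j=1}^{k−1} j·r(r−1)^{j−1} + k·R ) / (N−1), where R := (N−1) − ∑_{j=1}^{k−1} r(r−1)^{j−1}. (This is the lower bound d* on average shortest path length for any r-regular network of size N used in the paper, taking k to be the largest integer with R ≥ 0.) -/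
open Finset

section Aux

variable {V : Type*} [Fintype V] [DecidableEq V] (G : SimpleGraph V) [DecidableRel G.Adj]

/-- If `dist u v = j + 1` there is a neighbor of `v` at distance `j` from `u`. -/
lemma aux_exists_adj_closer (hconn : G.Connected) (u v : V) (j : ℕ)
    (h : G.dist u v = j + 1) :
    ∃ w, G.Adj w v ∧ G.dist u w = j := by
  obtain ⟨p, hp⟩ := (hconn v u).exists_walk_length_eq_dist
  rw [SimpleGraph.dist_comm, h] at hp
  cases p with
  | nil => simp at hp
  | cons hadj q =>
    rename_i w
    refine ⟨w, hadj.symm, ?_⟩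
    simp only [SimpleGraph.Walk.length_cons, Nat.add_right_cancel_iff] at hp
    have h1 : G.dist u w ≤ j := by
      have := SimpleGraph.dist_le q.reverse
      rwa [SimpleGraph.Walk.length_reverse, hp] at this
    have h2 : j ≤ G.dist u w := by
      have htri := hconn.dist_triangle (u := u) (v := w) (w := v)
      have hwv : G.dist w v ≤ 1 := (SimpleGraph.dist_eq_one_iff_adj.mpr hadj.symm).le
      omega
    omega

/-- The sphere of radius `j+1` around `u` has at most `r(r-1)^j` vertices. -/
lemma aux_sphere_card (hconn : G.Connected) (r : ℕ)
    (hreg : G.IsRegularOfDegree r) (u : V) (j : ℕ) :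
    (univ.filter (fun v => G.dist u v = j + 1)).card ≤ r * (r - 1) ^ j := by
  induction j with
  | zero =>
    have : (univ.filter (fun v => G.dist u v = 1)) ⊆ G.neighborFinset u := by
      intro v hv
      simp only [mem_filter] at hv
      rw [SimpleGraph.mem_neighborFinset]
      exact SimpleGraph.dist_eq_one_iff_adj.mp hv.2
    calc _ ≤ (G.neighborFinset u).card := card_le_card this
      _ = r := by rw [SimpleGraph.card_neighborFinset_eq_degree]; exact hreg u
      _ = r * (r - 1) ^ 0 := by ring
  | succ j ih =>
    set s := univ.filter (fun v => G.dist u v = j + 2) with hs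
    set t := univ.filter (fun v => G.dist u v = j + 1) with ht
    classical
    set f : V → V := fun v =>
      if h : ∃ w, G.Adj w v ∧ G.dist u w = j + 1 then h.choose else v with hf
    have hmaps : ∀ v ∈ s, f v ∈ t := by
      intro v hv
      simp only [hs, mem_filter] at hv
      have hex : ∃ w, G.Adj w v ∧ G.dist u w = j + 1 :=
        aux_exists_adj_closer G hconn u v (j + 1) hv.2
      simp only [hf, dif_pos hex, ht, mem_filter]
      exact ⟨mem_univ _, hex.choose_spec.2⟩
    have hfib : ∀ w ∈ t, (s.filter (fun v => f v = w)).card ≤ r - 1 := by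
      intro w hw
      simp only [ht, mem_filter] at hw
      obtain ⟨x, hx, hdx⟩ : ∃ x, G.Adj x w ∧ G.dist u x = j := by
        exact aux_exists_adj_closer G hconn u w j hw.2
      have hsub : s.filter (fun v => f v = w) ⊆ (G.neighborFinset w).erase x := by
        intro v hv
        simp only [mem_filter, hs] at hv
        obtain ⟨⟨_, hdv⟩, hfv⟩ := hv
        have hex : ∃ w', G.Adj w' v ∧ G.dist u w' = j + 1 :=
          aux_exists_adj_closer G hconn u v (j + 1) hdv
        have hadj : G.Adj w v := by
          have := hex.choose_spec.1
          rw [hf] at hfv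
          simp only [dif_pos hex] at hfv
          rwa [hfv] at this
        rw [mem_erase, SimpleGraph.mem_neighborFinset]
        refine ⟨?_, hadj⟩
        intro hvx
        rw [hvx] at hdv
        omega
      calc (s.filter (fun v => f v = w)).card
          ≤ ((G.neighborFinset w).erase x).card := card_le_card hsub
        _ ≤ (G.neighborFinset w).card - 1 := by
            by_cases hxw : x ∈ G.neighborFinset w
            · rw [card_erase_of_mem hxw]
            · rw [erase_eq_of_notMem hxw]
              exact absurd ((SimpleGraph.mem_neighborFinset _ _ _).mpr hx.symm) hxw
        _ = r - 1 := by rw [SimpleGraph.card_neighborFinset_eq_degree, hreg w]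
    have h1 : s.card ≤ (r - 1) * t.card :=
      card_le_mul_card_image_of_maps_to hmaps _ hfib
    calc s.card ≤ (r - 1) * t.card := h1
      _ ≤ (r - 1) * (r * (r - 1) ^ j) := Nat.mul_le_mul_left _ ih
      _ = r * (r - 1) ^ (j + 1) := by ring

/-- Ball bound: vertices ≠ u at distance < j number at most `∑_{i=1}^{j-1} r(r-1)^{i-1}`. -/
lemma aux_ball_card (hconn : G.Connected) (r : ℕ)
    (hreg : G.IsRegularOfDegree r) (u : V) (j : ℕ) (hj : 1 ≤ j) :
    ((univ.erase u).filter (fun v => G.dist u v < j)).card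
      ≤ ∑ i ∈ Finset.Icc 1 (j - 1), r * (r - 1) ^ (i - 1) := by
  set s := (univ.erase u).filter (fun v => G.dist u v < j) with hs
  have hmaps : ∀ v ∈ s, G.dist u v ∈ Finset.Icc 1 (j - 1) := by
    intro v hv
    simp only [hs, mem_filter, mem_erase] at hv
    have hpos : 0 < G.dist u v :=
      hconn.pos_dist_of_ne (fun h => hv.1.1 h.symm)
    rw [mem_Icc]
    omega
  have := card_eq_sum_card_fiberwise hmaps
  rw [this]
  apply sum_le_sum
  intro i hi
  rw [mem_Icc] at hi
  obtain ⟨hi1, _⟩ := hi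
  have hsub : s.filter (fun v => G.dist u v = i)
      ⊆ univ.filter (fun v => G.dist u v = (i - 1) + 1) := by
    intro v hv
    simp only [mem_filter, hs, mem_erase] at hv ⊢
    refine ⟨mem_univ _, ?_⟩
    rw [hv.2]
    omega
  calc (s.filter (fun v => G.dist u v = i)).card
      ≤ (univ.filter (fun v => G.dist u v = (i - 1) + 1)).card := card_le_card hsub
    _ ≤ r * (r - 1) ^ (i - 1) := aux_sphere_card G hconn r hreg u (i - 1)

/-- Algebraic rearrangement. -/
lemma aux_algebra (X : ℝ) (a : ℕ → ℝ) (k : ℕ) :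
    (∑ j ∈ Finset.Icc 1 (k - 1), (j : ℝ) * a j)
      + (k : ℝ) * (X - ∑ j ∈ Finset.Icc 1 (k - 1), a j)
    = ∑ j ∈ Finset.Icc 1 k, (X - ∑ i ∈ Finset.Icc 1 (j - 1), a i) := by
  induction k with
  | zero => simp
  | succ m ihm =>
    rw [Finset.sum_Icc_succ_top (by omega : 1 ≤ m + 1)]
    rw [← ihm]
    have hms : m + 1 - 1 = m := by omega
    rw [hms]
    cases m with
    | zero => simp
    | succ n =>
      have hns : n + 1 - 1 = n := by omega
      rw [hns, Finset.sum_Icc_succ_top (by omega : 1 ≤ n + 1),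
        Finset.sum_Icc_succ_top (by omega : 1 ≤ n + 1)]
      push_cast
      ring

/-- Truncated sum of distances as a sum of tail counts. -/
lemma aux_min_sum (u : V) (k : ℕ) :
    ∑ j ∈ Finset.Icc 1 k, ((univ.erase u).filter (fun v => j ≤ G.dist u v)).card
      = ∑ v ∈ univ.erase u, min (G.dist u v) k := by
  simp only [card_filter]
  rw [Finset.sum_comm]
  apply sum_congr rfl
  intro v _
  have : (Finset.Icc 1 k).filter (fun j => j ≤ G.dist u v)
      = Finset.Icc 1 (min (G.dist u v) k) := by
    ext j
    simp only [mem_filter, mem_Icc]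
    omega
  rw [← sum_filter, this]
  simp [Nat.card_Icc]

end Aux

/-- Lower bound `d*` on the average shortest path length of a connected
`r`-regular graph on `N ≥ 2` vertices: for every `k ≥ 1`,
`⟨D⟩ ≥ (∑_{j=1}^{k−1} j·r·(r−1)^{j−1} + k·R)/(N−1)`, where
`R = (N−1) − ∑_{j=1}^{k−1} r·(r−1)^{j−1}` and `⟨D⟩` is the average of
`dist(u,v)` over ordered pairs of distinct vertices. -/
theorem stmt_5 {V : Type*} [Fintype V] [DecidableEq V] (G : SimpleGraph V)
    [DecidableRel G.Adj] (N r : ℕ) (hN : Fintype.card V = N) (hN2 : 2 ≤ N)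
    (hconn : G.Connected) (hreg : G.IsRegularOfDegree r)
    (k : ℕ) (hk : 1 ≤ k) :
    ((∑ j ∈ Finset.Icc 1 (k - 1), (j : ℝ) * (r : ℝ) * ((r : ℝ) - 1) ^ (j - 1))
        + (k : ℝ) * (((N : ℝ) - 1)
            - ∑ j ∈ Finset.Icc 1 (k - 1), (r : ℝ) * ((r : ℝ) - 1) ^ (j - 1)))
        / ((N : ℝ) - 1)
      ≤ (1 / ((N : ℝ) * ((N : ℝ) - 1)))
          * ∑ p ∈ univ.offDiag, (G.dist p.1 p.2 : ℝ) := by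
  classical
  -- r ≥ 1
  have hr1 : 1 ≤ r := by
    obtain ⟨u, v, huv⟩ := Fintype.exists_pair_of_one_lt_card (by omega : 1 < Fintype.card V)
    have hpos : 0 < G.dist v u := hconn.pos_dist_of_ne (fun h => huv h.symm)
    obtain ⟨w, hw, _⟩ := aux_exists_adj_closer G hconn v u (G.dist v u - 1) (by omega)
    have : w ∈ G.neighborFinset u := by
      rw [SimpleGraph.mem_neighborFinset]; exact hw.symm
    have hc : (G.neighborFinset u).card = r := hreg u
    have := Finset.card_pos.mpr ⟨w, this⟩
    omega
  have hcastr : ((r - 1 : ℕ) : ℝ) = (r : ℝ) - 1 := by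
    push_cast [hr1]; ring
  set a : ℕ → ℝ := fun j => (r : ℝ) * ((r : ℝ) - 1) ^ (j - 1) with ha
  -- key per-vertex bound
  have key : ∀ u : V,
      (∑ j ∈ Finset.Icc 1 (k - 1), (j : ℝ) * a j)
        + (k : ℝ) * (((N : ℝ) - 1) - ∑ j ∈ Finset.Icc 1 (k - 1), a j)
      ≤ ∑ v ∈ univ.erase u, (G.dist u v : ℝ) := by
    intro u
    rw [aux_algebra ((N : ℝ) - 1) a k]
    have step1 : ∀ j ∈ Finset.Icc 1 k,
        ((N : ℝ) - 1) - ∑ i ∈ Finset.Icc 1 (j - 1), a i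
          ≤ (((univ.erase u).filter (fun v => j ≤ G.dist u v)).card : ℝ) := by
      intro j hj
      rw [mem_Icc] at hj
      have hsplit : ((univ.erase u).filter (fun v => j ≤ G.dist u v)).card
          + ((univ.erase u).filter (fun v => ¬ j ≤ G.dist u v)).card
          = (univ.erase u).card := card_filter_add_card_filter_not _
      have hcard : (univ.erase u).card = N - 1 := by
        rw [card_erase_of_mem (mem_univ u), card_univ, hN]
      have hball : ((univ.erase u).filter (fun v => ¬ j ≤ G.dist u v)).card
          ≤ ∑ i ∈ Finset.Icc 1 (j - 1), r * (r - 1) ^ (i - 1) := by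
        have : ((univ.erase u).filter (fun v => ¬ j ≤ G.dist u v))
            = ((univ.erase u).filter (fun v => G.dist u v < j)) := by
          apply filter_congr; intro v _
          exact not_le
        rw [this]
        exact aux_ball_card G hconn r hreg u j hj.1
      have hballR : (((univ.erase u).filter (fun v => ¬ j ≤ G.dist u v)).card : ℝ)
          ≤ ∑ i ∈ Finset.Icc 1 (j - 1), a i := by
        calc (((univ.erase u).filter (fun v => ¬ j ≤ G.dist u v)).card : ℝ)
            ≤ ((∑ i ∈ Finset.Icc 1 (j - 1), r * (r - 1) ^ (i - 1) : ℕ) : ℝ) := by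
              exact_mod_cast hball
          _ = ∑ i ∈ Finset.Icc 1 (j - 1), a i := by
              push_cast [hcastr]
              apply sum_congr rfl; intro i _; rw [ha]
        -- combine
      have hNR : ((N : ℝ) - 1)
          = (((univ.erase u).filter (fun v => j ≤ G.dist u v)).card : ℝ)
            + (((univ.erase u).filter (fun v => ¬ j ≤ G.dist u v)).card : ℝ) := by
        have hN1 : (1 : ℕ) ≤ N := by omega
        rw [← Nat.cast_add, hsplit, hcard]
        push_cast [hN1]
        ring
      rw [hNR]
      linarith
    calc ∑ j ∈ Finset.Icc 1 k, (((N : ℝ) - 1) - ∑ i ∈ Finset.Icc 1 (j - 1), a i)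
        ≤ ∑ j ∈ Finset.Icc 1 k,
            (((univ.erase u).filter (fun v => j ≤ G.dist u v)).card : ℝ) :=
          sum_le_sum step1
      _ = ((∑ j ∈ Finset.Icc 1 k,
            ((univ.erase u).filter (fun v => j ≤ G.dist u v)).card : ℕ) : ℝ) := by
          push_cast; ring
      _ = ((∑ v ∈ univ.erase u, min (G.dist u v) k : ℕ) : ℝ) := by
          rw [aux_min_sum]
      _ ≤ ((∑ v ∈ univ.erase u, G.dist u v : ℕ) : ℝ) := by
          exact_mod_cast sum_le_sum (fun v _ => min_le_left _ _)
      _ = ∑ v ∈ univ.erase u, (G.dist u v : ℝ) := by push_cast; ring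
  -- sum over all u
  set T : ℝ := (∑ j ∈ Finset.Icc 1 (k - 1), (j : ℝ) * a j)
      + (k : ℝ) * (((N : ℝ) - 1) - ∑ j ∈ Finset.Icc 1 (k - 1), a j) with hT
  have hsum : (N : ℝ) * T ≤ ∑ p ∈ univ.offDiag, (G.dist p.1 p.2 : ℝ) := by
    have hoff : ∑ p ∈ univ.offDiag, (G.dist p.1 p.2 : ℝ)
        = ∑ u : V, ∑ v ∈ univ.erase u, (G.dist u v : ℝ) := by
      rw [Finset.sum_sigma']
      apply Finset.sum_nbij' (fun p => ⟨p.1, p.2⟩) (fun p => (p.1, p.2))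
      · intro p hp
        simp only [Finset.mem_offDiag] at hp
        simp only [Finset.mem_sigma, Finset.mem_univ, Finset.mem_erase, true_and, and_true]
        exact fun h => hp.2.2 h.symm
      · intro p hp
        simp only [Finset.mem_sigma, Finset.mem_univ, Finset.mem_erase, true_and,
          and_true] at hp
        simp only [Finset.mem_offDiag, Finset.mem_univ, true_and]
        exact fun h => hp h.symm
      · intro p _; rfl
      · intro p _; rfl
      · intro p _; rfl
    rw [hoff]
    calc (N : ℝ) * T = ∑ _u : V, T := by
          rw [Finset.sum_const, card_univ, hN]; ring
      _ ≤ ∑ u : V, ∑ v ∈ univ.erase u, (G.dist u v : ℝ) := sum_le_sum (fun u _ => key u)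
  -- final arithmetic
  have hN1 : (0 : ℝ) < (N : ℝ) - 1 := by
    have : (2 : ℝ) ≤ (N : ℝ) := by exact_mod_cast hN2
    linarith
  have hN0 : (0 : ℝ) < (N : ℝ) := by linarith
  have hTe : (∑ j ∈ Finset.Icc 1 (k - 1), (j : ℝ) * (r : ℝ) * ((r : ℝ) - 1) ^ (j - 1))
      = ∑ j ∈ Finset.Icc 1 (k - 1), (j : ℝ) * a j := by
    apply sum_congr rfl; intro j _; rw [ha]; ring
  rw [hTe]
  show T / ((N : ℝ) - 1) ≤ _
  rw [div_le_iff₀ hN1]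
  have hD : (1 / ((N : ℝ) * ((N : ℝ) - 1))
        * ∑ p ∈ univ.offDiag, (G.dist p.1 p.2 : ℝ)) * ((N : ℝ) - 1)
      = (∑ p ∈ univ.offDiag, (G.dist p.1 p.2 : ℝ)) / (N : ℝ) := by
    field_simp
  rw [hD, le_div_iff₀ hN0, mul_comm]
  exact hsum
end

section
/- (Equation (1) of the paper: two-cluster upper bound on throughput.) Let G be a finite simple graph with capacities c : V × V → ℝ satisfying c(u,v) ≥ 0 and c(u,v) = 0 when u and v are not adjacent, and let V be partitioned into two clusters V₁, V₂. Let C := ∑_{(u,v)} c(u,v) be the total capacity and C̄ := Cap(V₁) the cross-cluster capacity. Let (s_i, t_i)_{i∈I} be commodities with s_i ≠ t_i and |I| = n₁ + n₂ for positive integers n₁, n₂, such that (i) the number of commodities with exactly one endpoint in V₁ equals 2n₁n₂/(n₁+n₂) (assumed to be a positive integer), and (ii) ∑_{i∈I} dist(s_i, t_i) = ⟨D⟩ · (n₁ + n₂) for some real ⟨D⟩ > 0. If (g_i) is a concurrent multicommodity flow respecting c with every commodity's value at least T ≥ 0, then T ≤ min{ C / (⟨D⟩ (n₁+n₂)), C̄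 (n₁+n₂) / (2 n₁ n₂) }. -/
open Finset

lemma flow_potential {V : Type*} [Fintype V] [DecidableEq V] (G : SimpleGraph V)
    {s t : V} (hst : s ≠ t) {x : ℝ} {g : V → V → ℝ} (hg : IsFlow G s t x g)
    (F : V → ℝ) :
    ∑ u, ∑ v, g u v * (F v - F u) = x * (F t - F s) := by
  obtain ⟨hpos, hadj, hcons, hval⟩ := hg
  have hnet_t : (∑ u, g u t) - (∑ v, g t v) = x := by
    have htot : ∑ w, ((∑ u, g u w) - (∑ v, g w v)) = 0 := by
      rw [Finset.sum_sub_distrib, Finset.sum_comm]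
      ring
    have h2 : ∑ w, ((∑ u, g u w) - (∑ v, g w v)) =
        ((∑ u, g u s) - (∑ v, g s v)) + ((∑ u, g u t) - (∑ v, g t v)) := by
      rw [show ((∑ u, g u s) - (∑ v, g s v)) + ((∑ u, g u t) - (∑ v, g t v))
          = ∑ w ∈ ({s, t} : Finset V), ((∑ u, g u w) - (∑ v, g w v)) from
          (Finset.sum_pair (f := fun w => (∑ u, g u w) - (∑ v, g w v)) hst).symm]
      refine (Finset.sum_subset (Finset.subset_univ _) ?_).symm
      intro w _ hw
      simp only [Finset.mem_insert, Finset.mem_singleton, not_or] at hw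
      rw [hcons w hw.1 hw.2]
      ring
    rw [h2] at htot
    linarith
  have key : ∑ u, ∑ v, g u v * (F v - F u)
      = ∑ w, F w * ((∑ u, g u w) - (∑ v, g w v)) := by
    simp only [mul_sub, Finset.sum_sub_distrib, Finset.mul_sum]
    congr 1
    · rw [Finset.sum_comm]
      simp [mul_comm]
    · simp [mul_comm]
  rw [key]
  have h3 : ∑ w, F w * ((∑ u, g u w) - (∑ v, g w v))
      = F s * ((∑ u, g u s) - (∑ v, g s v)) + F t * ((∑ u, g u t) - (∑ v, g t v)) := by
    rw [show F s * ((∑ u, g u s) - (∑ v, g s v)) + F t * ((∑ u, g u t) - (∑ v, g t v))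
        = ∑ w ∈ ({s, t} : Finset V), F w * ((∑ u, g u w) - (∑ v, g w v)) from
        (Finset.sum_pair (f := fun w => F w * ((∑ u, g u w) - (∑ v, g w v))) hst).symm]
    refine (Finset.sum_subset (Finset.subset_univ _) ?_).symm
    intro w _ hw
    simp only [Finset.mem_insert, Finset.mem_singleton, not_or] at hw
    rw [hcons w hw.1 hw.2]
    ring
  rw [h3, hnet_t]
  have : (∑ u, g u s) - (∑ v, g s v) = -x := by linarith
  rw [this]
  ring

lemma flow_cut {V : Type*} [Fintype V] [DecidableEq V] (G : SimpleGraph V)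
    {s t : V} (hst : s ≠ t) {x : ℝ} {g : V → V → ℝ} (hg : IsFlow G s t x g)
    (S : Finset V) (hs : s ∈ S) (ht : t ∉ S) :
    x ≤ ∑ u ∈ S, ∑ v ∈ Sᶜ, g u v := by
  have hpos := hg.1
  set F : V → ℝ := fun w => if w ∈ S then 0 else 1 with hF
  have hpot := flow_potential G hst hg F
  have hFt : F t = 1 := by simp [hF, ht]
  have hFs : F s = 0 := by simp [hF, hs]
  rw [hFt, hFs] at hpot
  have hx : x = ∑ u, ∑ v, g u v * (F v - F u) := by rw [hpot]; ring
  rw [hx]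
  have step : ∀ u v : V, g u v * (F v - F u)
      ≤ if u ∈ S ∧ v ∈ Sᶜ then g u v else 0 := by
    intro u v
    by_cases hu : u ∈ S <;> by_cases hv : v ∈ S <;>
      simp [hF, hu, hv, Finset.mem_compl] <;> nlinarith [hpos u v]
  calc ∑ u, ∑ v, g u v * (F v - F u)
      ≤ ∑ u, ∑ v, (if u ∈ S ∧ v ∈ Sᶜ then g u v else 0) := by
        exact Finset.sum_le_sum fun u _ => Finset.sum_le_sum fun v _ => step u v
    _ = ∑ u ∈ S, ∑ v ∈ Sᶜ, g u v := by
        have h1 : ∀ u : V, (∑ v, if u ∈ S ∧ v ∈ Sᶜ then g u v else 0)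
            = if u ∈ S then ∑ v ∈ Sᶜ, g u v else 0 := by
          intro u
          by_cases hu : u ∈ S
          · simp only [hu, true_and, if_true]
            rw [Finset.sum_ite_mem, Finset.univ_inter]
          · simp [hu]
        simp_rw [h1]
        rw [Finset.sum_ite_mem, Finset.univ_inter]

lemma flow_dist_le {V : Type*} [Fintype V] [DecidableEq V] (G : SimpleGraph V)
    {s t : V} (hst : s ≠ t) {x : ℝ} (hx : 0 ≤ x) {g : V → V → ℝ}
    (hg : IsFlow G s t x g) :
    x * (G.dist s t : ℝ) ≤ ∑ u, ∑ v, g u v := by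
  obtain ⟨hpos, hadj, hcons, hval⟩ := hg
  by_cases hr : G.Reachable s t
  · classical
    set d : ℝ := (G.dist s t : ℝ) with hd
    have hd0 : 0 ≤ d := by positivity
    set F : V → ℝ := fun w => if G.Reachable s w then min ((G.dist s w : ℝ)) d else d
      with hF
    have hFs : F s = 0 := by
      simp [hF, SimpleGraph.Reachable.refl, SimpleGraph.dist_self, hd0,
        min_eq_left hd0]
    have hFt : F t = d := by
      simp [hF, hr, le_of_eq hd]
    have hstep : ∀ u v : V, G.Adj u v → F v - F u ≤ 1 := by
      intro u v huv
      by_cases hu : G.Reachable s u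
      · have hv : G.Reachable s v := hu.trans huv.reachable
        have hdle : (G.dist s v : ℝ) ≤ (G.dist s u : ℝ) + 1 := by
          obtain ⟨p, hp⟩ := hu.exists_walk_length_eq_dist
          have := SimpleGraph.dist_le (p.concat huv)
          rw [SimpleGraph.Walk.length_concat, hp] at this
          exact_mod_cast this
        simp only [hF, hu, hv, if_true]
        have h1 : min ((G.dist s v : ℝ)) d ≤ min ((G.dist s u : ℝ) + 1) (d + 1) :=
          min_le_min hdle (by linarith)
        calc min ((G.dist s v : ℝ)) d - min ((G.dist s u : ℝ)) d
            ≤ min ((G.dist s u : ℝ) + 1) (d + 1) - min ((G.dist s u : ℝ)) d := by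
              linarith
          _ = 1 := by rw [min_add_add_right]; ring
      · have hv : ¬ G.Reachable s v := fun h => hu (h.trans huv.symm.reachable)
        simp [hF, hu, hv]
    have hpot := flow_potential G hst ⟨hpos, hadj, hcons, hval⟩ F
    rw [hFt, hFs, sub_zero] at hpot
    calc x * d = ∑ u, ∑ v, g u v * (F v - F u) := hpot.symm
      _ ≤ ∑ u, ∑ v, g u v := by
          refine Finset.sum_le_sum fun u _ => Finset.sum_le_sum fun v _ => ?_
          by_cases huv : G.Adj u v
          · nlinarith [hpos u v, hstep u v huv]
          · simp [hadj u v huv]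
  · rw [SimpleGraph.dist_eq_zero_of_not_reachable hr]
    simp only [Nat.cast_zero, mul_zero]
    exact Finset.sum_nonneg fun u _ => Finset.sum_nonneg fun v _ => hpos u v

/-- Equation (1) of the paper: two-cluster upper bound on throughput.
With total capacity `C`, cross-cluster capacity `C̄ = Cap(V₁)`,
`n₁ + n₂` commodities of which exactly `2n₁n₂/(n₁+n₂)` cross the cluster
boundary, and average endpoint distance `⟨D⟩ > 0`, any concurrent
multicommodity flow respecting the capacities with every commodity value at
least `T ≥ 0` satisfies
`T ≤ min { C/(⟨D⟩(n₁+n₂)), C̄(n₁+n₂)/(2n₁n₂) }`. -/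
theorem stmt_9 {V I : Type*} [Fintype V] [DecidableEq V] [Fintype I]
    [DecidableEq I] (G : SimpleGraph V) (c : V → V → ℝ)
    (hc0 : ∀ u v, 0 ≤ c u v) (hcadj : ∀ u v, ¬ G.Adj u v → c u v = 0)
    (V₁ V₂ : Finset V) (hdisj : Disjoint V₁ V₂) (hunion : V₁ ∪ V₂ = univ)
    (n₁ n₂ : ℕ) (hn₁ : 0 < n₁) (hn₂ : 0 < n₂)
    (s t : I → V) (hst : ∀ i, s i ≠ t i)
    (hcardI : Fintype.card I = n₁ + n₂)
    (hcross : (univ.filter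
        (fun i => (s i ∈ V₁ ∧ t i ∉ V₁) ∨ (t i ∈ V₁ ∧ s i ∉ V₁))).card
          * (n₁ + n₂) = 2 * n₁ * n₂)
    (Davg : ℝ) (hDavg : 0 < Davg)
    (hsum : (∑ i, (G.dist (s i) (t i) : ℝ)) = Davg * ((n₁ : ℝ) + (n₂ : ℝ)))
    (x : I → ℝ) (g : I → V → V → ℝ)
    (hflow : ∀ i, IsFlow G (s i) (t i) (x i) (g i))
    (hcap : ∀ u v, (∑ i, g i u v) ≤ c u v)
    (T : ℝ) (hT : 0 ≤ T) (hTx : ∀ i, T ≤ x i) :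
    T ≤ min ((∑ u, ∑ v, c u v) / (Davg * ((n₁ : ℝ) + (n₂ : ℝ))))
        ((∑ u ∈ V₁, ∑ v ∈ V₁ᶜ, (c u v + c v u)) * ((n₁ : ℝ) + (n₂ : ℝ))
          / (2 * (n₁ : ℝ) * (n₂ : ℝ))) := by
  have hposn : (0:ℝ) < (n₁ : ℝ) + (n₂ : ℝ) := by positivity
  have hgpos : ∀ i u v, 0 ≤ g i u v := fun i => (hflow i).1
  refine le_min ?_ ?_
  · -- total capacity bound
    rw [le_div_iff₀ (by positivity)]
    calc T * (Davg * ((n₁ : ℝ) + (n₂ : ℝ)))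
        = ∑ i, T * (G.dist (s i) (t i) : ℝ) := by
          rw [← Finset.mul_sum, hsum]
      _ ≤ ∑ i, x i * (G.dist (s i) (t i) : ℝ) := by
          refine Finset.sum_le_sum fun i _ => ?_
          exact mul_le_mul_of_nonneg_right (hTx i) (by positivity)
      _ ≤ ∑ i, ∑ u, ∑ v, g i u v := by
          refine Finset.sum_le_sum fun i _ => ?_
          exact flow_dist_le G (hst i) (le_trans hT (hTx i)) (hflow i)
      _ = ∑ u, ∑ v, ∑ i, g i u v := by
          rw [Finset.sum_comm]
          exact Finset.sum_congr rfl fun u _ => Finset.sum_comm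
      _ ≤ ∑ u, ∑ v, c u v := by
          exact Finset.sum_le_sum fun u _ => Finset.sum_le_sum fun v _ => hcap u v
  · -- cut bound
    set K := univ.filter
        (fun i => (s i ∈ V₁ ∧ t i ∉ V₁) ∨ (t i ∈ V₁ ∧ s i ∉ V₁)) with hK
    have hkpos : 0 < K.card := by
      rcases Nat.eq_zero_or_pos K.card with h | h
      · exfalso; rw [h] at hcross; simp at hcross; omega
      · exact h
    have hcut : ∀ i ∈ K, x i ≤ ∑ u ∈ V₁, ∑ v ∈ V₁ᶜ, (g i u v + g i v u) := by
      intro i hi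
      rw [hK, Finset.mem_filter] at hi
      rcases hi.2 with ⟨hs1, ht1⟩ | ⟨ht1, hs1⟩
      · calc x i ≤ ∑ u ∈ V₁, ∑ v ∈ V₁ᶜ, g i u v :=
              flow_cut G (hst i) (hflow i) V₁ hs1 ht1
          _ ≤ ∑ u ∈ V₁, ∑ v ∈ V₁ᶜ, (g i u v + g i v u) := by
              refine Finset.sum_le_sum fun u _ => Finset.sum_le_sum fun v _ => ?_
              linarith [hgpos i v u]
      · have h1 : x i ≤ ∑ u ∈ V₁ᶜ, ∑ v ∈ V₁ᶜᶜ, g i u v :=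
          flow_cut G (hst i) (hflow i) V₁ᶜ (Finset.mem_compl.2 hs1)
            (by simp [ht1])
        rw [compl_compl] at h1
        calc x i ≤ ∑ u ∈ V₁ᶜ, ∑ v ∈ V₁, g i u v := h1
          _ = ∑ u ∈ V₁, ∑ v ∈ V₁ᶜ, g i v u := Finset.sum_comm
          _ ≤ ∑ u ∈ V₁, ∑ v ∈ V₁ᶜ, (g i u v + g i v u) := by
              refine Finset.sum_le_sum fun u _ => Finset.sum_le_sum fun v _ => ?_
              linarith [hgpos i u v]
    have hTK : T * (K.card : ℝ) ≤ ∑ u ∈ V₁, ∑ v ∈ V₁ᶜ, (c u v + c v u) := by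
      calc T * (K.card : ℝ) = ∑ _i ∈ K, T := by
            rw [Finset.sum_const, nsmul_eq_mul]; ring
        _ ≤ ∑ i ∈ K, x i := Finset.sum_le_sum fun i _ => hTx i
        _ ≤ ∑ i ∈ K, ∑ u ∈ V₁, ∑ v ∈ V₁ᶜ, (g i u v + g i v u) :=
            Finset.sum_le_sum hcut
        _ = ∑ u ∈ V₁, ∑ v ∈ V₁ᶜ, ∑ i ∈ K, (g i u v + g i v u) := by
            rw [Finset.sum_comm]
            exact Finset.sum_congr rfl fun u _ => Finset.sum_comm
        _ ≤ ∑ u ∈ V₁, ∑ v ∈ V₁ᶜ, (c u v + c v u) := by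
            refine Finset.sum_le_sum fun u _ => Finset.sum_le_sum fun v _ => ?_
            have h1 : ∑ i ∈ K, g i u v ≤ ∑ i, g i u v :=
              Finset.sum_le_sum_of_subset_of_nonneg (Finset.subset_univ _)
                (fun i _ _ => hgpos i u v)
            have h2 : ∑ i ∈ K, g i v u ≤ ∑ i, g i v u :=
              Finset.sum_le_sum_of_subset_of_nonneg (Finset.subset_univ _)
                (fun i _ _ => hgpos i v u)
            rw [Finset.sum_add_distrib]
            linarith [hcap u v, hcap v u]
    rw [le_div_iff₀ (by positivity)]
    have hcrossR : (K.card : ℝ) * ((n₁ : ℝ) + (n₂ : ℝ)) = 2 * (n₁ : ℝ) * (n₂ : ℝ) := by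
      exact_mod_cast congrArg (Nat.cast : ℕ → ℝ) hcross
    calc T * (2 * (n₁ : ℝ) * (n₂ : ℝ)) = T * (K.card : ℝ) * ((n₁ : ℝ) + (n₂ : ℝ)) := by
          rw [← hcrossR]; ring
      _ ≤ (∑ u ∈ V₁, ∑ v ∈ V₁ᶜ, (c u v + c v u)) * ((n₁ : ℝ) + (n₂ : ℝ)) :=
          mul_le_mul_of_nonneg_right hTK (le_of_lt hposn)
end

section
/- (Arithmetic core of Lemma 2, corrected form.) Let n, p, q, k, x be real numbers with n > 0, p ≥ 0, q ≥ 0, 0 < k ≤ n/2, and 0 ≤ x ≤ k²/4, and set d := (p+q)·n. Then k·n/2 − 2x ≥ k(n−k)/2 > 0, and k·d − 2p·k² + 4x·(p − q) ≥ 2q · (k·n/2 − 2x). Consequently the ratio (k·d − 2p·k² + 4x(p−q)) / (k·n/2 − 2x) is at least 2q; in particular, when p ≥ q its minimum over x ∈ [0, k²/4] is attained at x = 0 with value (2d − 4kp)/n ≥ 2q. -/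
/-- Arithmetic core of Lemma 2 of the paper (corrected form). With
`d = (p+q)·n`, for `0 < k ≤ n/2` and `0 ≤ x ≤ k²/4`:
the demand term satisfies `k·n/2 − 2x ≥ k(n−k)/2 > 0`; the mixing lower bound
dominates `2q` times the demand term; hence the ratio is at least `2q`; and
when `p ≥ q` the ratio is minimized at `x = 0`, where its value is
`(2d − 4kp)/n ≥ 2q`. -/
theorem stmt_11 (n p q k x : ℝ) (hn : 0 < n) (hp : 0 ≤ p) (hq : 0 ≤ q)
    (hk0 : 0 < k) (hk : k ≤ n / 2) (hx0 : 0 ≤ x) (hx : x ≤ k ^ 2 / 4) :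
    (k * (n - k) / 2 ≤ k * n / 2 - 2 * x) ∧
    (0 < k * (n - k) / 2) ∧
    (2 * q * (k * n / 2 - 2 * x)
        ≤ k * ((p + q) * n) - 2 * p * k ^ 2 + 4 * x * (p - q)) ∧
    (2 * q ≤ (k * ((p + q) * n) - 2 * p * k ^ 2 + 4 * x * (p - q))
        / (k * n / 2 - 2 * x)) ∧
    (q ≤ p →
      ((k * ((p + q) * n) - 2 * p * k ^ 2) / (k * n / 2)
          ≤ (k * ((p + q) * n) - 2 * p * k ^ 2 + 4 * x * (p - q))
            / (k * n / 2 - 2 * x)) ∧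
      ((k * ((p + q) * n) - 2 * p * k ^ 2) / (k * n / 2)
          = (2 * ((p + q) * n) - 4 * k * p) / n) ∧
      (2 * q ≤ (2 * ((p + q) * n) - 4 * k * p) / n)) := by
  have h1 : k * (n - k) / 2 ≤ k * n / 2 - 2 * x := by nlinarith
  have h2 : 0 < k * (n - k) / 2 := by nlinarith
  have hD : 0 < k * n / 2 - 2 * x := lt_of_lt_of_le h2 h1
  have h3 : 2 * q * (k * n / 2 - 2 * x)
      ≤ k * ((p + q) * n) - 2 * p * k ^ 2 + 4 * x * (p - q) := by
    nlinarith [mul_nonneg hp hx0, mul_nonneg hp (show (0:ℝ) ≤ k * n - 2 * k ^ 2 by nlinarith)]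
  refine ⟨h1, h2, h3, ?_, ?_⟩
  · rw [le_div_iff₀ hD]; linarith
  · intro hqp
    have hkn : 0 < k * n / 2 := by positivity
    refine ⟨?_, ?_, ?_⟩
    · rw [div_le_div_iff₀ hkn hD]; nlinarith [mul_nonneg (mul_nonneg hp hx0) (sub_nonneg.2 (by linarith : k ≤ n))]
    · field_simp; ring
    · rw [le_div_iff₀ hn]; nlinarith
end

section
/- (Deterministic form of Lemma 2: the non-uniform sparsest cut for complete bipartite demands is Θ(q).) Let G be a simple graph on V = V₁ ⊔ V₂ with |V₁| = |V₂| = m and n := 2m, let p, q ≥ 0 and c > 0 be reals, and write e(X,Y) for the number of edges of G with one endpoint in X and the other in Y. Assume the expansion bounds: (i) for every A ⊆ V₁, e(A, V₁∖A) ≥ c·p·n·|A|·(1 − 2|A|/n); (ii) for every B ⊆ V₂, e(B, V₂∖B) ≥ c·p·n·|B|·(1 − 2|B|/n); (iii) for every A ⊆ V₁ and B ⊆ V₂, e(A, V₂∖B) + e(B, V₁∖A) ≥ c·q·n·( |A|(1 − 2|B|/n) + |B|(1 − 2|A|/n) ). Then for every S ⊆ V with Dem(S) := #{(u,v)皆∈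 V₁×V₂ : exactly one of u,v ∈ S} > 0, the number of edges of G between S and V∖S is at least 2·c·q·Dem(S). Moreover, if additionally every vertex of V₁ has exactly q·n neighbors in V₂, then e(V₁, V₂) = q·n·m and Dem(V₁) = m², so the cut S = V₁ achieves ratio e(V₁,V₂)/Dem(V₁) = 2q; hence the minimum over cuts of e(S, V∖S)/Dem(S) lies between 2cq and 2q. -/
open Finset

/-- The number of edges of `G` with first endpoint in `X` and second endpoint
in `Y` (counted as ordered pairs; for disjoint `X`, `Y` this is the number of
edges of `G` between `X` and `Y`). -/
def crossEdges {V : Type*} [DecidableEq V] (G : SimpleGraph V)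
    [DecidableRel G.Adj] (X Y : Finset V) : ℕ :=
  ((X ×ˢ Y).filter (fun p => G.Adj p.1 p.2)).card

/-- The number of complete-bipartite demand pairs `(u,v) ∈ V₁ × V₂` separated
by the cut `S` (exactly one endpoint in `S`). -/
def demSep {V : Type*} [DecidableEq V] (V₁ V₂ S : Finset V) : ℕ :=
  ((V₁ ×ˢ V₂).filter (fun p => (p.1 ∈ S ∧ p.2 ∉ S) ∨ (p.2 ∈ S ∧ p.1 ∉ S))).card

lemma demSep_eq {V : Type*} [DecidableEq V] (V₁ V₂ S : Finset V) :
    demSep V₁ V₂ S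
      = (V₁ ∩ S).card * (V₂ \ S).card + (V₁ \ S).card * (V₂ ∩ S).card := by
  unfold demSep
  rw [show ((V₁ ×ˢ V₂).filter (fun p => (p.1 ∈ S ∧ p.2 ∉ S) ∨ (p.2 ∈ S ∧ p.1 ∉ S)))
      = ((V₁ ∩ S) ×ˢ (V₂ \ S)) ∪ ((V₁ \ S) ×ˢ (V₂ ∩ S)) by
    ext p
    simp only [mem_filter, mem_product, mem_union, mem_inter, mem_sdiff]
    tauto]
  rw [card_union_of_disjoint, card_product, card_product]
  rw [Finset.disjoint_left]
  rintro p hp hq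
  simp only [mem_product, mem_inter, mem_sdiff] at hp hq
  tauto

lemma cross_le {V : Type*} [Fintype V] [DecidableEq V] (G : SimpleGraph V)
    [DecidableRel G.Adj] (V₁ V₂ S : Finset V) (hdisj : Disjoint V₁ V₂) :
    crossEdges G (V₁ ∩ S) (V₂ \ S) + crossEdges G (V₂ ∩ S) (V₁ \ S)
      ≤ crossEdges G S Sᶜ := by
  unfold crossEdges
  rw [← card_union_of_disjoint]
  · apply card_le_card
    intro x hx
    simp only [mem_union, mem_filter, mem_product, mem_inter, mem_sdiff,
      mem_compl] at hx ⊢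
    tauto
  · rw [Finset.disjoint_left]
    rintro x hx hy
    simp only [mem_filter, mem_product, mem_inter, mem_sdiff] at hx hy
    exact (Finset.disjoint_left.mp hdisj) hx.1.1.1 hy.1.1.1

/-- Deterministic form of Lemma 2 of the paper: under the expander-mixing
expansion hypotheses (i)–(iii), every cut `S` separating a positive number of
complete-bipartite demand pairs cuts at least `2·c·q·Dem(S)` edges of `G`;
moreover, if every vertex of `V₁` has exactly `q·n` neighbors in `V₂`, then
the cut `S = V₁` has `e(V₁,V₂) = q·n·m`, `Dem(V₁) = m²`, and ratio exactly
`2q`, so the non-uniform sparsest cut lies between `2cq` and `2q`. -/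
theorem stmt_12 {V : Type*} [Fintype V] [DecidableEq V] (G : SimpleGraph V)
    [DecidableRel G.Adj]
    (V₁ V₂ : Finset V) (hdisj : Disjoint V₁ V₂) (hunion : V₁ ∪ V₂ = univ)
    (m : ℕ) (hm : 0 < m) (h1 : V₁.card = m) (h2 : V₂.card = m)
    (p q c : ℝ) (hp : 0 ≤ p) (hq : 0 ≤ q) (hc : 0 < c)
    (hi : ∀ A ⊆ V₁,
      c * p * (2 * (m : ℝ)) * (A.card : ℝ) * (1 - 2 * (A.card : ℝ) / (2 * (m : ℝ)))
        ≤ (crossEdges G A (V₁ \ A) : ℝ))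
    (hii : ∀ B ⊆ V₂,
      c * p * (2 * (m : ℝ)) * (B.card : ℝ) * (1 - 2 * (B.card : ℝ) / (2 * (m : ℝ)))
        ≤ (crossEdges G B (V₂ \ B) : ℝ))
    (hiii : ∀ A ⊆ V₁, ∀ B ⊆ V₂,
      c * q * (2 * (m : ℝ)) * ((A.card : ℝ) * (1 - 2 * (B.card : ℝ) / (2 * (m : ℝ)))
          + (B.card : ℝ) * (1 - 2 * (A.card : ℝ) / (2 * (m : ℝ))))
        ≤ (crossEdges G A (V₂ \ B) : ℝ) + (crossEdges G B (V₁ \ A) : ℝ)) :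
    (∀ S : Finset V, 0 < demSep V₁ V₂ S →
        2 * c * q * (demSep V₁ V₂ S : ℝ) ≤ (crossEdges G S Sᶜ : ℝ)) ∧
    ((∀ v ∈ V₁, ((V₂.filter (fun w => G.Adj v w)).card : ℝ) = q * (2 * (m : ℝ))) →
      ((crossEdges G V₁ V₂ : ℝ) = q * (2 * (m : ℝ)) * (m : ℝ)) ∧
      (demSep V₁ V₂ V₁ = m ^ 2) ∧
      ((crossEdges G V₁ V₁ᶜ : ℝ) / (demSep V₁ V₂ V₁ : ℝ) = 2 * q) ∧
      (∀ S : Finset V, 0 < demSep V₁ V₂ S →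
        2 * c * q ≤ (crossEdges G S Sᶜ : ℝ) / (demSep V₁ V₂ S : ℝ))) := by
  have hm0 : (m : ℝ) ≠ 0 := Nat.cast_ne_zero.mpr hm.ne'
  -- main inequality
  have main : ∀ S : Finset V,
      2 * c * q * (demSep V₁ V₂ S : ℝ) ≤ (crossEdges G S Sᶜ : ℝ) := by
    intro S
    set A := V₁ ∩ S with hA
    set B := V₂ ∩ S with hB
    have hAs : A ⊆ V₁ := inter_subset_left
    have hBs : B ⊆ V₂ := inter_subset_left
    have hV1A : V₁ \ S = V₁ \ A := by rw [hA, sdiff_inter_self_left]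
    have hV2B : V₂ \ S = V₂ \ B := by rw [hB, sdiff_inter_self_left]
    have hcard1 : (V₁ \ A).card = m - A.card := by rw [card_sdiff_of_subset hAs, h1]
    have hcard2 : (V₂ \ B).card = m - B.card := by rw [card_sdiff_of_subset hBs, h2]
    have ham : A.card ≤ m := h1 ▸ card_le_card hAs
    have hbm : B.card ≤ m := h2 ▸ card_le_card hBs
    have key := hiii A hAs B hBs
    have hle := cross_le G V₁ V₂ S hdisj
    rw [hV1A, hV2B] at hle
    have hle' : (crossEdges G A (V₂ \ B) : ℝ) + (crossEdges G B (V₁ \ A) : ℝ)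
        ≤ (crossEdges G S Sᶜ : ℝ) := by exact_mod_cast hle
    refine le_trans (le_of_eq ?_) (le_trans key hle')
    have hds : (demSep V₁ V₂ S : ℝ)
        = (A.card : ℝ) * ((m : ℝ) - B.card) + ((m : ℝ) - A.card) * B.card := by
      rw [demSep_eq, hV1A, hV2B, hcard1, hcard2]
      push_cast [Nat.cast_sub ham, Nat.cast_sub hbm]
      ring
    rw [hds]
    field_simp
  refine ⟨fun S _ => main S, fun hdeg => ?_⟩
  have hcompl : V₁ᶜ = V₂ := by
    ext v
    have h3 : v ∈ V₁ → v ∉ V₂ := fun hv => Finset.disjoint_left.mp hdisj hv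
    have h4 : v ∈ V₁ ∪ V₂ := hunion ▸ mem_univ v
    simp only [mem_compl, mem_union] at *
    tauto
  have hcross : (crossEdges G V₁ V₂ : ℝ) = q * (2 * (m : ℝ)) * (m : ℝ) := by
    have hsum : crossEdges G V₁ V₂
        = ∑ v ∈ V₁, (V₂.filter (fun w => G.Adj v w)).card := by
      unfold crossEdges
      rw [card_eq_sum_card_fiberwise (f := Prod.fst) (t := V₁)
        (fun x hx => (mem_product.mp (mem_filter.mp hx).1).1)]
      refine Finset.sum_congr rfl fun v hv => ?_
      rw [show (((V₁ ×ˢ V₂).filter (fun p => G.Adj p.1 p.2)).filter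
            (fun a => a.1 = v)) = {v} ×ˢ (V₂.filter (fun w => G.Adj v w)) by
        ext x
        simp only [mem_filter, mem_product, mem_singleton]
        constructor
        · rintro ⟨⟨⟨_, h2'⟩, h3'⟩, rfl⟩
          exact ⟨rfl, h2', h3'⟩
        · rintro ⟨rfl, hy1, hy2⟩
          exact ⟨⟨⟨hv, hy1⟩, hy2⟩, rfl⟩]
      rw [card_product, card_singleton, one_mul]
    rw [hsum]
    push_cast
    rw [Finset.sum_congr rfl hdeg, Finset.sum_const, h1]
    push_cast; ring
  have hdem : demSep V₁ V₂ V₁ = m ^ 2 := by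
    unfold demSep
    rw [filter_true_of_mem, card_product, h1, h2, sq]
    intro x hx
    rw [mem_product] at hx
    exact Or.inl ⟨hx.1, Finset.disjoint_right.mp hdisj hx.2⟩
  refine ⟨hcross, hdem, ?_, fun S hS => ?_⟩
  · rw [hcompl, hcross, hdem]
    push_cast
    field_simp
  · rw [le_div_iff₀ (by exact_mod_cast hS)]
    exact main S
end
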